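/- Analytic tropicalization of subtraction-free rational expressions: for every subtraction-free rational expression f in k variables there is a constant C > 0 such that for all q ∈ (0,1] and all x = (x₁,…,x_k) ∈ ℝ^k, |−q·log eval_f(e^{−x₁/q},…,e^{−x_k/q}) − trop_f(x)| ≤ C·q; in particular −q·log eval_f(e^{−x₁/q},…,e^{−x_k/q}) converges to trop_f(x) uniformly in x as q → 0⁺. -/

import Mathlib

/-- Subtraction-free rational expressions in `k` variables: built from variables and positive
real constants using addition, multiplication and division. -/
inductive SFExpr (k : ℕ) : Type
  | var : Fin k → SFExpr k
  | const : (r : ℝ) → 0 < r → SFExpr k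
  | add : SFExpr k → SFExpr k → SFExpr k
  | mul : SFExpr k → SFExpr k → SFExpr k
  | div : SFExpr k → SFExpr k → SFExpr k

/-- Evaluation of a subtraction-free expression. -/
noncomputable def SFExpr.eval {k : ℕ} : SFExpr k → (Fin k → ℝ) → ℝ
  | .var i, x => x i
  | .const r _, _ => r
  | .add f g, x => f.eval x + g.eval x
  | .mul f g, x => f.eval x * g.eval x
  | .div f g, x => f.eval x / g.eval x

/-- Tropicalization: constants become `0`, `+` becomes `min`, `*` becomes `+`, `/` becomes `-`. -/
noncomputable def SFExpr.trop {k : ℕ} : SFExpr k → (Fin k → ℝ) → ℝ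
  | .var i, x => x i
  | .const _ _, _ => 0
  | .add f g, x => min (f.trop x) (g.trop x)
  | .mul f g, x => f.trop x + g.trop x
  | .div f g, x => f.trop x - g.trop x

lemma SFExpr.eval_pos {k : ℕ} (f : SFExpr k) (x : Fin k → ℝ) (hx : ∀ i, 0 < x i) :
    0 < f.eval x := by
  induction f with
  | var i => exact hx i
  | const r hr => exact hr
  | add f g hf hg => exact add_pos hf hg
  | mul f g hf hg => exact mul_pos hf hg
  | div f g hf hg => exact div_pos hf hg

lemma sf_key {k : ℕ} (f : SFExpr k) :
    ∃ C : ℝ, 0 < C ∧ ∀ q ∈ Set.Ioc (0:ℝ) 1, ∀ x : Fin k → ℝ,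
      |(-q) * Real.log (f.eval fun i => Real.exp (-x i / q)) - f.trop x| ≤ C * q := by
  induction f with
  | var i =>
    refine ⟨1, one_pos, fun q hq x => ?_⟩
    have hq0 : q ≠ 0 := ne_of_gt hq.1
    simp only [SFExpr.eval, SFExpr.trop, Real.log_exp]
    have : (-q) * (-x i / q) - x i = 0 := by field_simp; ring
    rw [this, abs_zero, one_mul]
    exact le_of_lt hq.1
  | const r hr =>
    refine ⟨|Real.log r| + 1, by positivity, fun q hq x => ?_⟩
    simp only [SFExpr.eval, SFExpr.trop, sub_zero, abs_mul, abs_neg, abs_of_pos hq.1]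
    nlinarith [abs_nonneg (Real.log r), hq.1]
  | add f g hf hg =>
    obtain ⟨C₁, hC₁, h₁⟩ := hf
    obtain ⟨C₂, hC₂, h₂⟩ := hg
    refine ⟨C₁ + C₂ + 1, by positivity, fun q hq x => ?_⟩
    have hq0 := hq.1
    set a := f.eval fun i => Real.exp (-x i / q) with ha
    set b := g.eval fun i => Real.exp (-x i / q) with hb
    have hap : 0 < a := f.eval_pos _ (fun i => Real.exp_pos _)
    have hbp : 0 < b := g.eval_pos _ (fun i => Real.exp_pos _)
    have habp : 0 < a + b := add_pos hap hbp
    have hmaxp : 0 < max a b := lt_max_of_lt_left hap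
    -- |(-q) log(a+b) - min((-q) log a, (-q) log b)| ≤ q * log 2 ≤ q
    have hmin : min ((-q) * Real.log a) ((-q) * Real.log b) = (-q) * Real.log (max a b) := by
      rcases le_total a b with h | h
      · rw [max_eq_right h, min_eq_right]
        have := Real.log_le_log (by positivity) h
        nlinarith
      · rw [max_eq_left h, min_eq_left]
        have := Real.log_le_log (by positivity) h
        nlinarith
    have hlog1 : Real.log (max a b) ≤ Real.log (a + b) :=
      Real.log_le_log hmaxp (max_le (by linarith) (by linarith))
    have hlog2 : Real.log (a + b) ≤ Real.log (max a b) + Real.log 2 := by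
      rw [← Real.log_mul (ne_of_gt hmaxp) two_ne_zero]
      refine Real.log_le_log habp ?_
      rcases le_total a b with h | h
      · rw [max_eq_right h]; linarith
      · rw [max_eq_left h]; linarith
    have hlog2' : Real.log 2 ≤ 1 := by
      have := Real.log_le_sub_one_of_pos (by norm_num : (0:ℝ) < 2)
      linarith
    have step1 : |(-q) * Real.log (a + b) -
        min ((-q) * Real.log a) ((-q) * Real.log b)| ≤ q := by
      rw [hmin, abs_le]
      constructor
      · nlinarith [Real.log_nonneg (by norm_num : (1:ℝ) ≤ 2)]
      · nlinarith
    have step2 : |min ((-q) * Real.log a) ((-q) * Real.log b) -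
        min (f.trop x) (g.trop x)| ≤ (C₁ + C₂) * q := by
      have := abs_min_sub_min_le_max ((-q) * Real.log a) ((-q) * Real.log b)
        (f.trop x) (g.trop x)
      have e1 := h₁ q hq x
      have e2 := h₂ q hq x
      refine this.trans (max_le ?_ ?_)
      · refine e1.trans ?_; nlinarith
      · refine e2.trans ?_; nlinarith
    calc |(-q) * Real.log (SFExpr.eval (f.add g) fun i => Real.exp (-x i / q)) -
          (f.add g).trop x|
        = |((-q) * Real.log (a + b) - min ((-q) * Real.log a) ((-q) * Real.log b)) +
          (min ((-q) * Real.log a) ((-q) * Real.log b) - min (f.trop x) (g.trop x))| := by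
          simp [SFExpr.eval, SFExpr.trop]; rfl
      _ ≤ _ := (abs_add_le _ _).trans (by nlinarith [step1, step2])
  | mul f g hf hg =>
    obtain ⟨C₁, hC₁, h₁⟩ := hf
    obtain ⟨C₂, hC₂, h₂⟩ := hg
    refine ⟨C₁ + C₂, by positivity, fun q hq x => ?_⟩
    set a := f.eval fun i => Real.exp (-x i / q) with ha
    set b := g.eval fun i => Real.exp (-x i / q) with hb
    have hap : 0 < a := f.eval_pos _ (fun i => Real.exp_pos _)
    have hbp : 0 < b := g.eval_pos _ (fun i => Real.exp_pos _)
    have e1 := h₁ q hq x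
    have e2 := h₂ q hq x
    have : (-q) * Real.log (SFExpr.eval (f.mul g) fun i => Real.exp (-x i / q)) -
        (f.mul g).trop x = ((-q) * Real.log a - f.trop x) + ((-q) * Real.log b - g.trop x) := by
      simp only [SFExpr.eval, SFExpr.trop, ← ha, ← hb,
        Real.log_mul (ne_of_gt hap) (ne_of_gt hbp)]
      ring
    rw [this]
    calc _ ≤ |(-q) * Real.log a - f.trop x| + |(-q) * Real.log b - g.trop x| := abs_add_le _ _
      _ ≤ C₁ * q + C₂ * q := add_le_add e1 e2
      _ = (C₁ + C₂) * q := by ring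
  | div f g hf hg =>
    obtain ⟨C₁, hC₁, h₁⟩ := hf
    obtain ⟨C₂, hC₂, h₂⟩ := hg
    refine ⟨C₁ + C₂, by positivity, fun q hq x => ?_⟩
    set a := f.eval fun i => Real.exp (-x i / q) with ha
    set b := g.eval fun i => Real.exp (-x i / q) with hb
    have hap : 0 < a := f.eval_pos _ (fun i => Real.exp_pos _)
    have hbp : 0 < b := g.eval_pos _ (fun i => Real.exp_pos _)
    have e1 := h₁ q hq x
    have e2 := h₂ q hq x
    have : (-q) * Real.log (SFExpr.eval (f.div g) fun i => Real.exp (-x i / q)) -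
        (f.div g).trop x = ((-q) * Real.log a - f.trop x) - ((-q) * Real.log b - g.trop x) := by
      simp only [SFExpr.eval, SFExpr.trop, ← ha, ← hb,
        Real.log_div (ne_of_gt hap) (ne_of_gt hbp)]
      ring
    rw [this]
    calc _ ≤ |(-q) * Real.log a - f.trop x| + |(-q) * Real.log b - g.trop x| := abs_sub _ _
      _ ≤ C₁ * q + C₂ * q := add_le_add e1 e2
      _ = (C₁ + C₂) * q := by ring

/-- Analytic tropicalization of subtraction-free rational expressions: a uniform `O(q)` bound,
and in particular uniform convergence to the tropicalization as `q → 0⁺`. -/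
theorem analytic_tropicalization {k : ℕ} (f : SFExpr k) :
    (∃ C : ℝ, 0 < C ∧ ∀ q ∈ Set.Ioc (0:ℝ) 1, ∀ x : Fin k → ℝ,
      |(-q) * Real.log (f.eval fun i => Real.exp (-x i / q)) - f.trop x| ≤ C * q) ∧
    TendstoUniformly
      (fun (q : ℝ) (x : Fin k → ℝ) => (-q) * Real.log (f.eval fun i => Real.exp (-x i / q)))
      f.trop (nhdsWithin 0 (Set.Ioi 0)) := by
  obtain ⟨C, hC, hbound⟩ := sf_key f
  refine ⟨⟨C, hC, hbound⟩, ?_⟩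
  rw [Metric.tendstoUniformly_iff]
  intro ε hε
  have hδ : (0:ℝ) < min 1 (ε / C) := lt_min one_pos (div_pos hε hC)
  have hmem : Set.Ioo (0:ℝ) (min 1 (ε / C)) ∈ nhdsWithin 0 (Set.Ioi 0) :=
    Ioo_mem_nhdsGT_of_mem ⟨le_refl _, hδ⟩
  filter_upwards [hmem] with q hq x
  have hq1 : q ∈ Set.Ioc (0:ℝ) 1 := ⟨hq.1, le_of_lt (lt_of_lt_of_le hq.2 (min_le_left _ _))⟩
  have h := hbound q hq1 x
  rw [Real.dist_eq, abs_sub_comm]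
  have : C * q < ε := by
    have : q < ε / C := lt_of_lt_of_le hq.2 (min_le_right _ _)
    calc C * q < C * (ε / C) := by exact mul_lt_mul_of_pos_left this hC
      _ = ε := by field_simp
  linarith
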